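/- Let f, g be regulated on (a,b), α strictly increasing, with D_α f and D_α g existing everywhere and D_α g of constant sign on (a,b). If the ratio (D_α f)/(D_α g) is increasing on (a,b), then for all a < s < t < b: (D_α f)(s)/(D_α g)(s) ≤ (f^-(t) - f^+(s))/(g^-(t) - g^+(s)) ≤ (D_α f)(t)/(D_α g)(t). -/

import Mathlib

open Filter Topology Function Set MeasureTheory

/-- `x` lies in the interval `(a, b)` with extended-real endpoints. -/
def MemI (a b : EReal) (x : ℝ) : Prop := a < (x : EReal) ∧ (x : EReal) < b

/-- `f` is regulated on `(a, b)`: both one-sided limits exist (as real numbers)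
at every point of `(a, b)`. -/
def RegulatedOn' (f : ℝ → ℝ) (a b : EReal) : Prop :=
  ∀ x : ℝ, MemI a b x →
    (∃ L : ℝ, Tendsto f (𝓝[<] x) (𝓝 L)) ∧ ∃ R : ℝ, Tendsto f (𝓝[>] x) (𝓝 R)

/-- The symmetric `α`-derivative of `f` at `x` equals `A`:
`(D_α f)(x) = lim_{h↓0} (f⁻(x+h) - f⁺(x-h)) / (α⁻(x+h) - α⁺(x-h))`. -/
def HasDerivAlpha (f α : ℝ → ℝ) (x A : ℝ) : Prop :=
  Tendsto (fun h : ℝ =>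
      (leftLim f (x + h) - rightLim f (x - h)) /
        (leftLim α (x + h) - rightLim α (x - h)))
    (𝓝[>] (0 : ℝ)) (𝓝 A)

/-- The filter of real numbers approaching `b : EReal` from the left (`x ↑ b`). -/
noncomputable def leftFilter (b : EReal) : Filter ℝ := comap (fun x : ℝ => (x : EReal)) (𝓝[<] b)

/-- The filter of real numbers approaching `a : EReal` from the right (`x ↓ a`). -/
noncomputable def rightFilter (a : EReal) : Filter ℝ := comap (fun x : ℝ => (x : EReal)) (𝓝[>] a)

namespace Stmt14Aux

variable {a b : EReal} {α F G f g : ℝ → ℝ}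

lemma memI_of_between {s t y : ℝ} (hs : MemI a b s) (ht : MemI a b t)
    (h1 : s ≤ y) (h2 : y ≤ t) : MemI a b y :=
  ⟨lt_of_lt_of_le hs.1 (EReal.coe_le_coe_iff.2 h1),
   lt_of_le_of_lt (EReal.coe_le_coe_iff.2 h2) ht.2⟩

lemma exists_delta {x : ℝ} (hx : MemI a b x) :
    ∃ δ > 0, ∀ y : ℝ, |y - x| < δ → MemI a b y := by
  obtain ⟨a', ha1, ha2⟩ := EReal.exists_between_coe_real hx.1
  obtain ⟨b', hb1, hb2⟩ := EReal.exists_between_coe_real hx.2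
  have ha2' : a' < x := by exact_mod_cast ha2
  have hb1' : x < b' := by exact_mod_cast hb1
  refine ⟨min (x - a') (b' - x), lt_min (by linarith) (by linarith), ?_⟩
  intro y hy
  have h1 := min_le_left (x - a') (b' - x)
  have h2 := min_le_right (x - a') (b' - x)
  rw [abs_lt] at hy
  constructor
  · exact ha1.trans (EReal.coe_lt_coe_iff.2 (by linarith [hy.1]))
  · exact (EReal.coe_lt_coe_iff.2 (show y < b' by linarith [hy.2])).trans hb2

lemma tendsto_leftLim' (hF : RegulatedOn' F a b) {x : ℝ} (hx : MemI a b x) :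
    Tendsto F (𝓝[<] x) (𝓝 (leftLim F x)) := by
  obtain ⟨L, hL⟩ := (hF x hx).1
  rwa [leftLim_eq_of_tendsto hL]

lemma tendsto_rightLim' (hF : RegulatedOn' F a b) {x : ℝ} (hx : MemI a b x) :
    Tendsto F (𝓝[>] x) (𝓝 (rightLim F x)) := by
  obtain ⟨R, hR⟩ := (hF x hx).2
  rwa [rightLim_eq_of_tendsto hR]

lemma regulated_combo (hF : RegulatedOn' F a b) (hG : RegulatedOn' G a b) (c d : ℝ) :
    RegulatedOn' (fun y => c * F y + d * G y) a b := fun x hx =>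
  ⟨⟨_, ((tendsto_leftLim' hF hx).const_mul c).add ((tendsto_leftLim' hG hx).const_mul d)⟩,
   ⟨_, ((tendsto_rightLim' hF hx).const_mul c).add ((tendsto_rightLim' hG hx).const_mul d)⟩⟩

lemma leftLim_combo (hF : RegulatedOn' F a b) (hG : RegulatedOn' G a b) {x : ℝ}
    (hx : MemI a b x) (c d : ℝ) :
    leftLim (fun y => c * F y + d * G y) x = c * leftLim F x + d * leftLim G x :=
  leftLim_eq_of_tendsto
    (((tendsto_leftLim' hF hx).const_mul c).add ((tendsto_leftLim' hG hx).const_mul d))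

lemma rightLim_combo (hF : RegulatedOn' F a b) (hG : RegulatedOn' G a b) {x : ℝ}
    (hx : MemI a b x) (c d : ℝ) :
    rightLim (fun y => c * F y + d * G y) x = c * rightLim F x + d * rightLim G x :=
  rightLim_eq_of_tendsto
    (((tendsto_rightLim' hF hx).const_mul c).add ((tendsto_rightLim' hG hx).const_mul d))

lemma regulated_alpha (hα : StrictMonoOn α {x : ℝ | MemI a b x}) : RegulatedOn' α a b := by
  intro x hx
  obtain ⟨a', ha1, ha2⟩ := EReal.exists_between_coe_real hx.1
  obtain ⟨b', hb1, hb2⟩ := EReal.exists_between_coe_real hx.2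
  have ha2' : a' < x := by exact_mod_cast ha2
  have hb1' : x < b' := by exact_mod_cast hb1
  set c : ℝ → ℝ := fun y => max a' (min y b') with hc
  have hcmem : ∀ y, MemI a b (c y) := by
    intro y
    constructor
    · exact lt_of_lt_of_le ha1 (EReal.coe_le_coe_iff.2 (le_max_left a' _))
    · have h : c y ≤ b' := max_le (by linarith) (min_le_right _ _)
      exact lt_of_le_of_lt (EReal.coe_le_coe_iff.2 h) hb2
  have hmono : Monotone (α ∘ c) := by
    intro y z hyz
    exact hα.monotoneOn (hcmem y) (hcmem z) (max_le_max le_rfl (min_le_min hyz le_rfl))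
  constructor
  · refine ⟨_, Tendsto.congr' ?_ (hmono.tendsto_nhdsLT x)⟩
    filter_upwards [Ioo_mem_nhdsLT_of_mem (⟨ha2', le_refl x⟩ : x ∈ Ioc a' x)] with y hy
    have : c y = y := by
      rw [hc]
      simp only
      rw [min_eq_left (by linarith [hy.2] : y ≤ b'), max_eq_right hy.1.le]
    simp [Function.comp, this]
  · refine ⟨_, Tendsto.congr' ?_ (hmono.tendsto_nhdsGT x)⟩
    filter_upwards [Ioo_mem_nhdsGT_of_mem (⟨le_refl x, hb1'⟩ : x ∈ Ico x b')] with y hy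
    have : c y = y := by
      rw [hc]
      simp only
      rw [min_eq_left hy.2.le, max_eq_right (by linarith [hy.1] : a' ≤ y)]
    simp [Function.comp, this]

lemma denom_eventually (hα : StrictMonoOn α {x : ℝ | MemI a b x}) (hαr : RegulatedOn' α a b)
    {x : ℝ} (hx : MemI a b x) :
    ∀ᶠ h in 𝓝[>] (0:ℝ), MemI a b (x - h) ∧ MemI a b (x + h) ∧
      0 < leftLim α (x + h) - rightLim α (x - h) := by
  obtain ⟨δ, hδ, hball⟩ := exists_delta hx
  filter_upwards [Ioo_mem_nhdsGT_of_mem (⟨le_refl (0:ℝ), hδ⟩ : (0:ℝ) ∈ Ico 0 δ)] with h hh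
  obtain ⟨hh1, hh2⟩ := hh
  have hm : MemI a b (x - h) := hball _ (by rw [abs_lt]; constructor <;> linarith)
  have hp : MemI a b (x + h) := hball _ (by rw [abs_lt]; constructor <;> linarith)
  have hm2 : MemI a b (x - h/2) := hball _ (by rw [abs_lt]; constructor <;> linarith)
  have hp2 : MemI a b (x + h/2) := hball _ (by rw [abs_lt]; constructor <;> linarith)
  refine ⟨hm, hp, ?_⟩
  have e1 : rightLim α (x - h) ≤ α (x - h/2) := by
    refine le_of_tendsto (tendsto_rightLim' hαr hm) ?_
    filter_upwards [Ioo_mem_nhdsGT_of_mem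
      (⟨le_refl (x - h), show x - h < x - h/2 by linarith⟩ : (x-h) ∈ Ico (x-h) (x-h/2))] with z hz
    exact hα.monotoneOn (hball z (by rw [abs_lt]; constructor <;> [linarith [hz.1]; linarith [hz.2]]))
      hm2 hz.2.le
  have e2 : α (x - h/2) < α (x + h/2) := hα hm2 hp2 (by linarith)
  have e3 : α (x + h/2) ≤ leftLim α (x + h) := by
    refine ge_of_tendsto (tendsto_leftLim' hαr hp) ?_
    filter_upwards [Ioo_mem_nhdsLT_of_mem
      (⟨show x + h/2 < x + h by linarith, le_refl (x+h)⟩ : (x+h) ∈ Ioc (x+h/2) (x+h))] with z hz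
    exact hα.monotoneOn hp2 (hball z (by rw [abs_lt]; constructor <;> [linarith [hz.1]; linarith [hz.2]]))
      hz.1.le
  linarith

lemma M1 (hF : RegulatedOn' F a b) {x : ℝ} (hx : MemI a b x) :
    Tendsto (rightLim F) (𝓝[>] x) (𝓝 (rightLim F x)) := by
  rw [Metric.tendsto_nhdsWithin_nhds]
  intro ε hε
  obtain ⟨δ0, hδ0, hball⟩ := exists_delta hx
  have hR := tendsto_rightLim' hF hx
  rw [Metric.tendsto_nhdsWithin_nhds] at hR
  obtain ⟨δ1, hδ1, h1⟩ := hR (ε/2) (by linarith)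
  refine ⟨min δ0 δ1, lt_min hδ0 hδ1, ?_⟩
  intro y hy hyd
  have hyd' : |y - x| < min δ0 δ1 := by rwa [Real.dist_eq] at hyd
  have hyI : MemI a b y := hball y (hyd'.trans_le (min_le_left _ _))
  have hxy : x < y := hy
  have hya := (abs_lt.1 hyd').2
  have key : ∀ᶠ z in 𝓝[>] y, dist (F z) (rightLim F x) ≤ ε/2 := by
    filter_upwards [Ioo_mem_nhdsGT_of_mem
      (⟨le_refl y, show y < x + min δ0 δ1 by linarith⟩ : y ∈ Ico y (x + min δ0 δ1))] with z hz
    refine (h1 (show z ∈ Ioi x from hxy.trans hz.1) ?_).le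
    rw [Real.dist_eq, abs_lt]
    constructor
    · have := lt_min hδ0 hδ1; linarith [hxy.trans hz.1]
    · have h3 : min δ0 δ1 ≤ δ1 := min_le_right _ _; linarith [hz.2]
  have h2 : dist (rightLim F y) (rightLim F x) ≤ ε/2 :=
    le_of_tendsto ((tendsto_rightLim' hF hyI).dist tendsto_const_nhds) key
  calc dist (rightLim F y) (rightLim F x) ≤ ε/2 := h2
    _ < ε := by linarith

lemma M2 (hF : RegulatedOn' F a b) {x : ℝ} (hx : MemI a b x) :
    Tendsto (rightLim F) (𝓝[<] x) (𝓝 (leftLim F x)) := by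
  rw [Metric.tendsto_nhdsWithin_nhds]
  intro ε hε
  obtain ⟨δ0, hδ0, hball⟩ := exists_delta hx
  have hL := tendsto_leftLim' hF hx
  rw [Metric.tendsto_nhdsWithin_nhds] at hL
  obtain ⟨δ1, hδ1, h1⟩ := hL (ε/2) (by linarith)
  refine ⟨min δ0 δ1, lt_min hδ0 hδ1, ?_⟩
  intro y hy hyd
  have hyd' : |y - x| < min δ0 δ1 := by rwa [Real.dist_eq] at hyd
  have hyI : MemI a b y := hball y (hyd'.trans_le (min_le_left _ _))
  have hxy : y < x := hy
  have hya := (abs_lt.1 hyd').1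
  have key : ∀ᶠ z in 𝓝[>] y, dist (F z) (leftLim F x) ≤ ε/2 := by
    filter_upwards [Ioo_mem_nhdsGT_of_mem (⟨le_refl y, hxy⟩ : y ∈ Ico y x)] with z hz
    refine (h1 (show z ∈ Iio x from hz.2) ?_).le
    rw [Real.dist_eq, abs_lt]
    constructor
    · have h3 : min δ0 δ1 ≤ δ1 := min_le_right _ _; linarith [hz.1]
    · linarith [hz.2, hδ1]
  have h2 : dist (rightLim F y) (leftLim F x) ≤ ε/2 :=
    le_of_tendsto ((tendsto_rightLim' hF hyI).dist tendsto_const_nhds) key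
  calc dist (rightLim F y) (leftLim F x) ≤ ε/2 := h2
    _ < ε := by linarith

lemma M3 (hF : RegulatedOn' F a b) {x : ℝ} (hx : MemI a b x) :
    Tendsto (leftLim F) (𝓝[>] x) (𝓝 (rightLim F x)) := by
  rw [Metric.tendsto_nhdsWithin_nhds]
  intro ε hε
  obtain ⟨δ0, hδ0, hball⟩ := exists_delta hx
  have hR := tendsto_rightLim' hF hx
  rw [Metric.tendsto_nhdsWithin_nhds] at hR
  obtain ⟨δ1, hδ1, h1⟩ := hR (ε/2) (by linarith)
  refine ⟨min δ0 δ1, lt_min hδ0 hδ1, ?_⟩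
  intro y hy hyd
  have hyd' : |y - x| < min δ0 δ1 := by rwa [Real.dist_eq] at hyd
  have hyI : MemI a b y := hball y (hyd'.trans_le (min_le_left _ _))
  have hxy : x < y := hy
  have hya := (abs_lt.1 hyd').2
  have key : ∀ᶠ z in 𝓝[<] y, dist (F z) (rightLim F x) ≤ ε/2 := by
    filter_upwards [Ioo_mem_nhdsLT_of_mem (⟨hxy, le_refl y⟩ : y ∈ Ioc x y)] with z hz
    refine (h1 (show z ∈ Ioi x from hz.1) ?_).le
    rw [Real.dist_eq, abs_lt]
    constructor
    · have := lt_min hδ0 hδ1; linarith [hz.1]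
    · have h3 : min δ0 δ1 ≤ δ1 := min_le_right _ _; linarith [hz.2]
  have h2 : dist (leftLim F y) (rightLim F x) ≤ ε/2 :=
    le_of_tendsto ((tendsto_leftLim' hF hyI).dist tendsto_const_nhds) key
  calc dist (leftLim F y) (rightLim F x) ≤ ε/2 := h2
    _ < ε := by linarith

lemma tendsto_addh (x : ℝ) : Tendsto (fun h : ℝ => x + h) (𝓝[>] (0:ℝ)) (𝓝[>] x) := by
  apply tendsto_nhdsWithin_of_tendsto_nhds_of_eventually_within
  · have h : Tendsto (fun h : ℝ => x + h) (𝓝 (0:ℝ)) (𝓝 (x + 0)) :=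
      tendsto_const_nhds.add tendsto_id
    rw [add_zero] at h
    exact h.mono_left nhdsWithin_le_nhds
  · filter_upwards [self_mem_nhdsWithin] with h hh
    exact lt_add_of_pos_right x hh

lemma tendsto_subh (x : ℝ) : Tendsto (fun h : ℝ => x - h) (𝓝[>] (0:ℝ)) (𝓝[<] x) := by
  apply tendsto_nhdsWithin_of_tendsto_nhds_of_eventually_within
  · have h : Tendsto (fun h : ℝ => x - h) (𝓝 (0:ℝ)) (𝓝 (x - 0)) :=
      tendsto_const_nhds.sub tendsto_id
    rw [sub_zero] at h
    exact h.mono_left nhdsWithin_le_nhds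
  · filter_upwards [self_mem_nhdsWithin] with h hh
    exact sub_lt_self x hh

lemma alpha_jump_nonneg (hα : StrictMonoOn α {x : ℝ | MemI a b x}) (hαr : RegulatedOn' α a b)
    {x : ℝ} (hx : MemI a b x) : leftLim α x ≤ rightLim α x := by
  obtain ⟨δ, hδ, hball⟩ := exists_delta hx
  have h1 : leftLim α x ≤ α x := by
    refine le_of_tendsto (tendsto_leftLim' hαr hx) ?_
    filter_upwards [Ioo_mem_nhdsLT_of_mem
      (⟨show x - δ < x by linarith, le_refl x⟩ : x ∈ Ioc (x - δ) x)] with z hz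
    exact hα.monotoneOn (hball z (by rw [abs_lt]; constructor <;> [linarith [hz.1]; linarith [hz.2]]))
      hx hz.2.le
  have h2 : α x ≤ rightLim α x := by
    refine ge_of_tendsto (tendsto_rightLim' hαr hx) ?_
    filter_upwards [Ioo_mem_nhdsGT_of_mem
      (⟨le_refl x, show x < x + δ by linarith⟩ : x ∈ Ico x (x + δ))] with z hz
    exact hα.monotoneOn hx (hball z (by rw [abs_lt]; constructor <;> [linarith [hz.1]; linarith [hz.2]]))
      hz.1.le
  linarith

lemma jump_eq (hα : StrictMonoOn α {x : ℝ | MemI a b x}) (hαr : RegulatedOn' α a b)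
    (hF : RegulatedOn' F a b) {x A : ℝ} (hx : MemI a b x)
    (hd : HasDerivAlpha F α x A) :
    rightLim F x - leftLim F x = A * (rightLim α x - leftLim α x) := by
  have hnum : Tendsto (fun h : ℝ => leftLim F (x+h) - rightLim F (x-h)) (𝓝[>] (0:ℝ))
      (𝓝 (rightLim F x - leftLim F x)) :=
    Tendsto.sub ((M3 hF hx).comp (tendsto_addh x)) ((M2 hF hx).comp (tendsto_subh x))
  have hden : Tendsto (fun h : ℝ => leftLim α (x+h) - rightLim α (x-h)) (𝓝[>] (0:ℝ))
      (𝓝 (rightLim α x - leftLim α x)) :=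
    Tendsto.sub ((M3 hαr hx).comp (tendsto_addh x)) ((M2 hαr hx).comp (tendsto_subh x))
  have h2 : Tendsto (fun h : ℝ =>
      ((leftLim F (x+h) - rightLim F (x-h)) / (leftLim α (x+h) - rightLim α (x-h))) *
        (leftLim α (x+h) - rightLim α (x-h)))
      (𝓝[>] (0:ℝ)) (𝓝 (A * (rightLim α x - leftLim α x))) := hd.mul hden
  have h3 : (fun h : ℝ =>
      ((leftLim F (x+h) - rightLim F (x-h)) / (leftLim α (x+h) - rightLim α (x-h))) *
        (leftLim α (x+h) - rightLim α (x-h))) =ᶠ[𝓝[>] (0:ℝ)]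
      (fun h : ℝ => leftLim F (x+h) - rightLim F (x-h)) := by
    filter_upwards [denom_eventually hα hαr hx] with h hh
    exact div_mul_cancel₀ _ hh.2.2.ne'
  exact tendsto_nhds_unique hnum (Tendsto.congr' h3 h2)

lemma jump_nonneg (hα : StrictMonoOn α {x : ℝ | MemI a b x}) (hαr : RegulatedOn' α a b)
    (hF : RegulatedOn' F a b) {x A : ℝ} (hx : MemI a b x)
    (hd : HasDerivAlpha F α x A) (hA : 0 ≤ A) : leftLim F x ≤ rightLim F x := by
  have h1 := jump_eq hα hαr hF hx hd
  have h2 := alpha_jump_nonneg hα hαr hx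
  nlinarith [mul_nonneg hA (sub_nonneg.2 h2)]

lemma hasDerivAlpha_combo (hα : StrictMonoOn α {x : ℝ | MemI a b x}) (hαr : RegulatedOn' α a b)
    (hF : RegulatedOn' F a b) (hG : RegulatedOn' G a b) {x A B : ℝ} (hx : MemI a b x)
    (c d : ℝ) (hA : HasDerivAlpha F α x A) (hB : HasDerivAlpha G α x B) :
    HasDerivAlpha (fun y => c * F y + d * G y) α x (c * A + d * B) := by
  refine Tendsto.congr' ?_ ((hA.const_mul c).add (hB.const_mul d))
  filter_upwards [denom_eventually hα hαr hx] with h hh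
  obtain ⟨h1, h2, _⟩ := hh
  rw [leftLim_combo hF hG h2 c d, rightLim_combo hF hG h1 c d]
  ring
lemma core (H : ℝ → ℝ) (hH : RegulatedOn' H a b) {s t : ℝ}
    (hs : MemI a b s) (ht : MemI a b t) (hst : s < t)
    (key : ∀ x, s ≤ x → x ≤ t → ∀ᶠ h in 𝓝[>] (0:ℝ), rightLim H (x - h) ≤ leftLim H (x + h)) :
    rightLim H s ≤ leftLim H t := by
  refine le_of_forall_pos_le_add ?_
  intro ε hε
  set m := rightLim H s with hm
  set T := {x : ℝ | x ∈ Icc s t ∧ ∀ y, s < y → y < x → m - ε ≤ rightLim H y} with hT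
  have hsT : s ∈ T := ⟨⟨le_refl s, hst.le⟩, fun y h1 h2 => absurd (h1.trans h2) (lt_irrefl s)⟩
  have hbdd : BddAbove T := ⟨t, fun x hx => hx.1.2⟩
  set c := sSup T with hc
  have hcs : s ≤ c := le_csSup hbdd hsT
  have hct : c ≤ t := csSup_le ⟨s, hsT⟩ (fun x hx => hx.1.2)
  have hcI : MemI a b c := memI_of_between hs ht hcs hct
  have hF1 : ∀ y, s < y → y < c → m - ε ≤ rightLim H y := by
    intro y h1 h2
    obtain ⟨x, hxT, hyx⟩ := exists_lt_of_lt_csSup ⟨s, hsT⟩ h2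
    exact hxT.2 y h1 hyx
  have hsc : s < c := by
    have h1 := M1 hH hs
    have h2 : ∀ᶠ y in 𝓝[>] s, m - ε < rightLim H y :=
      h1.eventually (eventually_gt_nhds (by linarith))
    obtain ⟨u, hu, hsub⟩ := mem_nhdsGT_iff_exists_Ioo_subset.1 h2
    have huT : min u t ∈ T := by
      refine ⟨⟨(lt_min hu hst).le, min_le_right _ _⟩, fun y hy1 hy2 => ?_⟩
      exact (hsub ⟨hy1, hy2.trans_le (min_le_left _ _)⟩).le
    exact lt_of_lt_of_le (lt_min hu hst) (le_csSup hbdd huT)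
  have hlc : m - ε ≤ leftLim H c := by
    refine ge_of_tendsto (M2 hH hcI) ?_
    filter_upwards [Ioo_mem_nhdsLT_of_mem (⟨hsc, le_refl c⟩ : c ∈ Ioc s c)] with y hy
    exact hF1 y hy.1 hy.2
  rcases eq_or_lt_of_le hct with hct' | hct'
  · rw [hct'] at hlc; linarith
  · exfalso
    obtain ⟨u, hu0, hsub⟩ := mem_nhdsGT_iff_exists_Ioo_subset.1 (key c hcs hct)
    set δ := min u (min (c - s) (t - c)) with hδdef
    have hδ0 : 0 < δ := lt_min hu0 (lt_min (by linarith) (by linarith))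
    have hδcs : δ ≤ c - s := le_trans (min_le_right _ _) (min_le_left _ _)
    have hδtc : δ ≤ t - c := le_trans (min_le_right _ _) (min_le_right _ _)
    have hkey : ∀ h : ℝ, 0 < h → h < δ → m - ε ≤ leftLim H (c + h) := by
      intro h hh1 hh2
      have h3 : rightLim H (c - h) ≤ leftLim H (c + h) :=
        hsub ⟨hh1, hh2.trans_le (min_le_left _ _)⟩
      have h4 : m - ε ≤ rightLim H (c - h) := hF1 _ (by linarith) (by linarith)
      linarith
    have hstep : ∀ y, c ≤ y → y < c + δ/2 → m - ε ≤ rightLim H y := by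
      intro y hy1 hy2
      have hyI : MemI a b y := memI_of_between hs ht (hcs.trans hy1) (by linarith)
      refine ge_of_tendsto (M3 hH hyI) ?_
      filter_upwards [Ioo_mem_nhdsGT_of_mem
        (⟨le_refl y, show y < c + δ by linarith⟩ : y ∈ Ico y (c + δ))] with z hz
      have h5 := hkey (z - c) (by linarith [hz.1]) (by linarith [hz.2])
      have h6 : c + (z - c) = z := by ring
      rwa [h6] at h5
    have hT2 : c + δ/2 ∈ T := by
      refine ⟨⟨by linarith, by linarith⟩, ?_⟩
      intro y h1 h2
      rcases lt_or_ge y c with h3 | h3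
      · exact hF1 y h1 h3
      · exact hstep y h3 h2
    have h7 := le_csSup hbdd hT2
    linarith

lemma L1 (hα : StrictMonoOn α {x : ℝ | MemI a b x}) (hαr : RegulatedOn' α a b)
    (hF : RegulatedOn' F a b) {s t : ℝ} (hs : MemI a b s) (ht : MemI a b t) (hst : s < t)
    (hder : ∀ x, s ≤ x → x ≤ t → ∃ A, 0 ≤ A ∧ HasDerivAlpha F α x A) :
    rightLim F s ≤ leftLim F t := by
  have hC : ∀ ε : ℝ, 0 < ε →
      rightLim F s ≤ leftLim F t + ε * (leftLim α t - rightLim α s) := by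
    intro ε hε
    set H : ℝ → ℝ := fun y => 1 * F y + ε * α y with hH
    have hHreg : RegulatedOn' H a b := regulated_combo hF hαr 1 ε
    have hkey : ∀ x, s ≤ x → x ≤ t →
        ∀ᶠ h in 𝓝[>] (0:ℝ), rightLim H (x - h) ≤ leftLim H (x + h) := by
      intro x hx1 hx2
      have hxI : MemI a b x := memI_of_between hs ht hx1 hx2
      obtain ⟨A, hA0, hAd⟩ := hder x hx1 hx2
      filter_upwards [denom_eventually hα hαr hxI,
        hAd.eventually (eventually_gt_nhds (show -ε < A by linarith))] with h hh hq
      obtain ⟨h1, h2, h3⟩ := hh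
      rw [hH]
      rw [leftLim_combo hF hαr h2 1 ε, rightLim_combo hF hαr h1 1 ε]
      have hnum : leftLim F (x+h) - rightLim F (x-h) =
          ((leftLim F (x+h) - rightLim F (x-h)) / (leftLim α (x+h) - rightLim α (x-h))) *
            (leftLim α (x+h) - rightLim α (x-h)) := (div_mul_cancel₀ _ h3.ne').symm
      nlinarith [mul_lt_mul_of_pos_right hq h3]
    have hcore := core H hHreg hs ht hst hkey
    rw [hH] at hcore
    rw [leftLim_combo hF hαr ht 1 ε, rightLim_combo hF hαr hs 1 ε] at hcore
    have hr : ε * (leftLim α t - rightLim α s) = ε * leftLim α t - ε * rightLim α s := by ring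
    linarith
  refine le_of_forall_pos_le_add ?_
  intro ε hε
  set C := leftLim α t - rightLim α s with hCdef
  have h1 := hC (ε / (|C| + 1)) (by positivity)
  have h2 : (ε / (|C| + 1)) * C ≤ ε := by
    have hC1 : C ≤ |C| := le_abs_self C
    have h3 : (ε / (|C| + 1)) * C ≤ (ε / (|C| + 1)) * (|C| + 1) :=
      mul_le_mul_of_nonneg_left (by linarith) (by positivity)
    rwa [div_mul_cancel₀ ε (by positivity : (|C| + 1) ≠ 0)] at h3
  linarith

lemma gpos {Dg : ℝ → ℝ} (hα : StrictMonoOn α {x : ℝ | MemI a b x}) (hαr : RegulatedOn' α a b)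
    (hg : RegulatedOn' g a b)
    (hDg : ∀ x, MemI a b x → HasDerivAlpha g α x (Dg x))
    (hpos : ∀ x, MemI a b x → 0 < Dg x)
    {s t : ℝ} (hs : MemI a b s) (ht : MemI a b t) (hst : s < t) :
    rightLim g s < leftLim g t := by
  obtain ⟨x0, hsx0, hx0t⟩ : ∃ x0, s < x0 ∧ x0 < t := ⟨(s+t)/2, by linarith, by linarith⟩
  have hx0I := memI_of_between hs ht hsx0.le hx0t.le
  have hev := (denom_eventually hα hαr hx0I).and
    (((hDg x0 hx0I).eventually (eventually_gt_nhds (hpos x0 hx0I))).and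
      (Ioo_mem_nhdsGT_of_mem (⟨le_refl (0:ℝ),
        lt_min (by linarith : (0:ℝ) < x0 - s) (by linarith : (0:ℝ) < t - x0)⟩ :
          (0:ℝ) ∈ Ico 0 (min (x0 - s) (t - x0)))))
  obtain ⟨h, ⟨hd1, hd2, hd3⟩, hq, hh⟩ := hev.exists
  obtain ⟨hh1, hh2⟩ := hh
  have hh3 : h < x0 - s := hh2.trans_le (min_le_left _ _)
  have hh4 : h < t - x0 := hh2.trans_le (min_le_right _ _)
  have hA3 : rightLim g (x0 - h) < leftLim g (x0 + h) := by
    have hmul := mul_pos hq hd3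
    rw [div_mul_cancel₀ _ hd3.ne'] at hmul
    linarith
  have hA1 : rightLim g s ≤ leftLim g (x0 - h) := by
    refine L1 hα hαr hg hs hd1 (by linarith) ?_
    intro x h1 h2
    have hxI := memI_of_between hs hd1 h1 h2
    exact ⟨Dg x, (hpos x hxI).le, hDg x hxI⟩
  have hA2 : leftLim g (x0 - h) ≤ rightLim g (x0 - h) :=
    jump_nonneg hα hαr hg hd1 (hDg _ hd1) (hpos _ hd1).le
  have hA4 : leftLim g (x0 + h) ≤ rightLim g (x0 + h) :=
    jump_nonneg hα hαr hg hd2 (hDg _ hd2) (hpos _ hd2).le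
  have hA5 : rightLim g (x0 + h) ≤ leftLim g t := by
    refine L1 hα hαr hg hd2 ht (by linarith) ?_
    intro x h1 h2
    have hxI := memI_of_between hd2 ht h1 h2
    exact ⟨Dg x, (hpos x hxI).le, hDg x hxI⟩
  linarith

lemma main_pos (a b : EReal) (hab : a < b) (f g α : ℝ → ℝ) (Df Dg : ℝ → ℝ)
    (hf : RegulatedOn' f a b) (hg : RegulatedOn' g a b)
    (hα : StrictMonoOn α {x : ℝ | MemI a b x})
    (hDf : ∀ x : ℝ, MemI a b x → HasDerivAlpha f α x (Df x))
    (hDg : ∀ x : ℝ, MemI a b x → HasDerivAlpha g α x (Dg x))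
    (hpos : ∀ x : ℝ, MemI a b x → 0 < Dg x)
    (hmono : MonotoneOn (fun x => Df x / Dg x) {x : ℝ | MemI a b x}) :
    ∀ s t : ℝ, MemI a b s → MemI a b t → s < t →
      Df s / Dg s ≤ (leftLim f t - rightLim f s) / (leftLim g t - rightLim g s) ∧
      (leftLim f t - rightLim f s) / (leftLim g t - rightLim g s) ≤ Df t / Dg t := by
  have hαr : RegulatedOn' α a b := regulated_alpha hα
  intro s t hs ht hst
  have hΔg : 0 < leftLim g t - rightLim g s := by
    have := gpos hα hαr hg hDg hpos hs ht hst
    linarith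
  constructor
  · -- left inequality
    set r := Df s / Dg s with hrdef
    have h1 : rightLim (fun y => 1 * f y + (-r) * g y) s ≤
        leftLim (fun y => 1 * f y + (-r) * g y) t := by
      refine L1 hα hαr (regulated_combo hf hg 1 (-r)) hs ht hst ?_
      intro x hx1 hx2
      have hxI : MemI a b x := memI_of_between hs ht hx1 hx2
      refine ⟨1 * Df x + (-r) * Dg x, ?_,
        hasDerivAlpha_combo hα hαr hf hg hxI 1 (-r) (hDf x hxI) (hDg x hxI)⟩
      have h2 : r ≤ Df x / Dg x := hmono hs hxI hx1
      have h3 := (le_div_iff₀ (hpos x hxI)).1 h2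
      nlinarith
    rw [leftLim_combo hf hg ht 1 (-r), rightLim_combo hf hg hs 1 (-r)] at h1
    rw [le_div_iff₀ hΔg]
    nlinarith [h1]
  · -- right inequality
    set r := Df t / Dg t with hrdef
    have h1 : rightLim (fun y => r * g y + (-1) * f y) s ≤
        leftLim (fun y => r * g y + (-1) * f y) t := by
      refine L1 hα hαr (regulated_combo hg hf r (-1)) hs ht hst ?_
      intro x hx1 hx2
      have hxI : MemI a b x := memI_of_between hs ht hx1 hx2
      refine ⟨r * Dg x + (-1) * Df x, ?_,
        hasDerivAlpha_combo hα hαr hg hf hxI r (-1) (hDg x hxI) (hDf x hxI)⟩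
      have h2 : Df x / Dg x ≤ r := hmono hxI ht hx2
      have h3 := (div_le_iff₀ (hpos x hxI)).1 h2
      nlinarith
    rw [leftLim_combo hg hf ht r (-1), rightLim_combo hg hf hs r (-1)] at h1
    rw [div_le_iff₀ hΔg]
    nlinarith [h1]

theorem stmt14' (a b : EReal) (hab : a < b) (f g α : ℝ → ℝ) (Df Dg : ℝ → ℝ)
    (hf : RegulatedOn' f a b) (hg : RegulatedOn' g a b)
    (hα : StrictMonoOn α {x : ℝ | MemI a b x})
    (hDf : ∀ x : ℝ, MemI a b x → HasDerivAlpha f α x (Df x))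
    (hDg : ∀ x : ℝ, MemI a b x → HasDerivAlpha g α x (Dg x))
    (hsign : (∀ x : ℝ, MemI a b x → 0 < Dg x) ∨ (∀ x : ℝ, MemI a b x → Dg x < 0))
    (hmono : MonotoneOn (fun x => Df x / Dg x) {x : ℝ | MemI a b x}) :
    ∀ s t : ℝ, MemI a b s → MemI a b t → s < t →
      Df s / Dg s ≤ (leftLim f t - rightLim f s) / (leftLim g t - rightLim g s) ∧
      (leftLim f t - rightLim f s) / (leftLim g t - rightLim g s) ≤ Df t / Dg t := by
  intro s t hs ht hst
  rcases hsign with hpos | hneg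
  · exact main_pos a b hab f g α Df Dg hf hg hα hDf hDg hpos hmono s t hs ht hst
  · have hαr : RegulatedOn' α a b := regulated_alpha hα
    set f1 : ℝ → ℝ := fun y => (-1 : ℝ) * f y + (0:ℝ) * g y with hf1def
    set g1 : ℝ → ℝ := fun y => (0 : ℝ) * f y + (-1:ℝ) * g y with hg1def
    set Df1 : ℝ → ℝ := fun x => (-1 : ℝ) * Df x + (0:ℝ) * Dg x with hDf1def
    set Dg1 : ℝ → ℝ := fun x => (0 : ℝ) * Df x + (-1:ℝ) * Dg x with hDg1def
    have hf1 : RegulatedOn' f1 a b := regulated_combo hf hg (-1) 0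
    have hg1 : RegulatedOn' g1 a b := regulated_combo hf hg 0 (-1)
    have hDf1 : ∀ x : ℝ, MemI a b x → HasDerivAlpha f1 α x (Df1 x) := fun x hx =>
      hasDerivAlpha_combo hα hαr hf hg hx (-1) 0 (hDf x hx) (hDg x hx)
    have hDg1 : ∀ x : ℝ, MemI a b x → HasDerivAlpha g1 α x (Dg1 x) := fun x hx =>
      hasDerivAlpha_combo hα hαr hf hg hx 0 (-1) (hDf x hx) (hDg x hx)
    have hpos1 : ∀ x : ℝ, MemI a b x → 0 < Dg1 x := by
      intro x hx
      have := hneg x hx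
      simp only [hDg1def, zero_mul, neg_one_mul, zero_add]
      linarith
    have he : ∀ z : ℝ, Df1 z / Dg1 z = Df z / Dg z := by
      intro z
      simp only [hDf1def, hDg1def, zero_mul, neg_one_mul, zero_add, add_zero, mul_zero]
      exact neg_div_neg_eq _ _
    have hmono1 : MonotoneOn (fun x => Df1 x / Dg1 x) {x : ℝ | MemI a b x} := by
      intro x hx y hy hxy
      simp only [he]
      exact hmono hx hy hxy
    obtain ⟨h1, h2⟩ :=
      main_pos a b hab f1 g1 α Df1 Dg1 hf1 hg1 hα hDf1 hDg1 hpos1 hmono1 s t hs ht hst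
    have ef1 : leftLim f1 t = (-1) * leftLim f t + 0 * leftLim g t := leftLim_combo hf hg ht _ _
    have ef2 : rightLim f1 s = (-1) * rightLim f s + 0 * rightLim g s :=
      rightLim_combo hf hg hs _ _
    have eg1 : leftLim g1 t = 0 * leftLim f t + (-1) * leftLim g t := leftLim_combo hf hg ht _ _
    have eg2 : rightLim g1 s = 0 * rightLim f s + (-1) * rightLim g s :=
      rightLim_combo hf hg hs _ _
    have eq1 : (leftLim f1 t - rightLim f1 s) / (leftLim g1 t - rightLim g1 s) =
        (leftLim f t - rightLim f s) / (leftLim g t - rightLim g s) := by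
      rw [ef1, ef2, eg1, eg2,
        show (-1) * leftLim f t + 0 * leftLim g t - ((-1) * rightLim f s + 0 * rightLim g s) =
          -(leftLim f t - rightLim f s) by ring,
        show 0 * leftLim f t + (-1) * leftLim g t - (0 * rightLim f s + (-1) * rightLim g s) =
          -(leftLim g t - rightLim g s) by ring,
        neg_div_neg_eq]
    rw [eq1, he s] at h1
    rw [eq1, he t] at h2
    exact ⟨h1, h2⟩

end Stmt14Aux

/-- If `(D_α f)/(D_α g)` is increasing on `(a,b)` and `D_α g` has constant sign,
then the difference quotient is bracketed by the endpoint values of the ratio. -/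
theorem stmt14 (a b : EReal) (hab : a < b) (f g α : ℝ → ℝ) (Df Dg : ℝ → ℝ)
    (hf : RegulatedOn' f a b) (hg : RegulatedOn' g a b)
    (hα : StrictMonoOn α {x : ℝ | MemI a b x})
    (hDf : ∀ x : ℝ, MemI a b x → HasDerivAlpha f α x (Df x))
    (hDg : ∀ x : ℝ, MemI a b x → HasDerivAlpha g α x (Dg x))
    (hsign : (∀ x : ℝ, MemI a b x → 0 < Dg x) ∨ (∀ x : ℝ, MemI a b x → Dg x < 0))
    (hmono : MonotoneOn (fun x => Df x / Dg x) {x : ℝ | MemI a b x}) :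
    ∀ s t : ℝ, MemI a b s → MemI a b t → s < t →
      Df s / Dg s ≤ (leftLim f t - rightLim f s) / (leftLim g t - rightLim g s) ∧
      (leftLim f t - rightLim f s) / (leftLim g t - rightLim g s) ≤ Df t / Dg t := by
  exact Stmt14Aux.stmt14' a b hab f g α Df Dg hf hg hα hDf hDg hsign hmono
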